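/- arXiv:1908.02157 — 4 statements merged into one kernel-verified Lean document; each statement's English description precedes it below -/
import Mathlib

section
/- Let λ ∈ ℂ and define f₁(y) := (1+y)^{−λ} − (1−y)^{−λ} for y ∈ (−1,1) (principal branch powers) and f₂ := λ f₁. Then f₁ ∈ C^∞((−1,1)) and the pair (f₁,f₂) satisfies 𝔏₀(f₁,f₂) = λ(f₁,f₂) pointwise on (−1,1), i.e., f₂ = λ f₁ and (1−y²)f₁''(y) − 2y f₁'(y) − 2y f₂'(y) − f₂(y) = λ f₂(y) for all y ∈ (−1,1). Moreover, if Re λ < 0 then f₁ is not identically zero and ∫_{−1}^{1}(1−y²)|f₁'(y)|² dy + ∫_{−1}^{1}|λ f₁(y)|² dy < ∞. -/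
open MeasureTheory Set ENNReal

/-- The eigenfunction candidate `f₁(y) = (1+y)^{−λ} − (1−y)^{−λ}` (principal branch). -/
noncomputable def eigf (lam : ℂ) (y : ℝ) : ℂ :=
  (1 + (y:ℂ)) ^ (-lam) - (1 - (y:ℂ)) ^ (-lam)

lemma hdPlus (c : ℂ) {y : ℝ} (hy : -1 < y) :
    HasDerivAt (fun t : ℝ => ((1:ℂ) + (t:ℂ)) ^ c) (c * (1 + (y:ℂ)) ^ (c - 1)) y := by
  have hs : ((1:ℂ) + (y:ℂ)) ∈ Complex.slitPlane := by
    rw [show ((1:ℂ) + (y:ℂ)) = ((1+y : ℝ) : ℂ) by push_cast; ring]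
    exact Complex.ofReal_mem_slitPlane.2 (by linarith)
  have h0 : HasDerivAt (fun z : ℂ => (1:ℂ) + z) 1 (y:ℂ) := (hasDerivAt_id _).const_add 1
  simpa using (h0.cpow_const hs (c := c)).comp_ofReal

lemma hdMinus (c : ℂ) {y : ℝ} (hy : y < 1) :
    HasDerivAt (fun t : ℝ => ((1:ℂ) - (t:ℂ)) ^ c) (-(c * (1 - (y:ℂ)) ^ (c - 1))) y := by
  have hs : ((1:ℂ) - (y:ℂ)) ∈ Complex.slitPlane := by
    rw [show ((1:ℂ) - (y:ℂ)) = ((1-y : ℝ) : ℂ) by push_cast; ring]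
    exact Complex.ofReal_mem_slitPlane.2 (by linarith)
  have h0 : HasDerivAt (fun z : ℂ => (1:ℂ) - z) (-1) (y:ℂ) := (hasDerivAt_id _).const_sub 1
  simpa using (h0.cpow_const hs (c := c)).comp_ofReal

/-- Eigenvalues of the free generator (Remark after Corollary `cor:specL0`): with
`f₁(y) = (1+y)^{−λ} − (1−y)^{−λ}` and `f₂ = λf₁`, the pair satisfies
`𝔏₀(f₁,f₂) = λ(f₁,f₂)` on `(-1,1)`; moreover, for `Re λ < 0`, `f₁` is nontrivial and has
finite energy norm. -/
theorem stmt12 (lam : ℂ) :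
    ContDiffOn ℝ (⊤:ℕ∞) (eigf lam) (Ioo (-1:ℝ) 1) ∧
    (∀ y ∈ Ioo (-1:ℝ) 1,
      (fun y' => lam * eigf lam y') y = lam * eigf lam y ∧
      (1 - (y:ℂ)^2) * deriv (deriv (eigf lam)) y - 2 * (y:ℂ) * deriv (eigf lam) y
        - 2 * (y:ℂ) * deriv (fun y' => lam * eigf lam y') y - lam * eigf lam y
        = lam * (lam * eigf lam y)) ∧
    (lam.re < 0 →
      (∃ y ∈ Ioo (-1:ℝ) 1, eigf lam y ≠ 0) ∧
      ((∫⁻ y in Ioo (-1:ℝ) 1, ENNReal.ofReal ((1 - y^2) * ‖deriv (eigf lam) y‖^2)) +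
        ∫⁻ y in Ioo (-1:ℝ) 1, ENNReal.ofReal (‖lam * eigf lam y‖^2)) < ⊤) := by
  -- first derivative
  have hd1 : ∀ y ∈ Ioo (-1:ℝ) 1, HasDerivAt (eigf lam)
      (-lam * (1+(y:ℂ))^(-lam-1) - lam * (1-(y:ℂ))^(-lam-1)) y := by
    intro y hy
    have h := (hdPlus (-lam) hy.1).sub (hdMinus (-lam) hy.2)
    have : HasDerivAt (fun t : ℝ => ((1:ℂ) + (t:ℂ)) ^ (-lam) - ((1:ℂ) - (t:ℂ)) ^ (-lam))
        (-lam * (1+(y:ℂ))^(-lam-1) - lam * (1-(y:ℂ))^(-lam-1)) y := by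
      exact h.congr_deriv (by ring)
    exact this
  -- second derivative of eigf (i.e. derivative of the explicit first derivative)
  have hd2 : ∀ y ∈ Ioo (-1:ℝ) 1, HasDerivAt
      (fun t : ℝ => -lam * (1+(t:ℂ))^(-lam-1) - lam * (1-(t:ℂ))^(-lam-1))
      (lam*(lam+1)*(1+(y:ℂ))^(-lam-1-1) - lam*(lam+1)*(1-(y:ℂ))^(-lam-1-1)) y := by
    intro y hy
    have h := ((hdPlus (-lam-1) hy.1).const_mul (-lam)).sub
      ((hdMinus (-lam-1) hy.2).const_mul lam)
    exact h.congr_deriv (by ring)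
  -- smoothness
  have hsmooth : ContDiffOn ℝ (⊤:ℕ∞) (eigf lam) (Ioo (-1:ℝ) 1) := by
    intro y hy
    apply ContDiffAt.contDiffWithinAt
    have A1 : AnalyticAt ℂ (fun z : ℂ => (1 + z)^(-lam)) (y:ℂ) := by
      apply AnalyticAt.cpow (analyticAt_const.add (analyticAt_id)) analyticAt_const
      show ((1:ℂ) + (y:ℂ)) ∈ Complex.slitPlane
      rw [show ((1:ℂ) + (y:ℂ)) = ((1+y : ℝ) : ℂ) by push_cast; ring]
      exact Complex.ofReal_mem_slitPlane.2 (by linarith [hy.1])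
    have A2 : AnalyticAt ℂ (fun z : ℂ => (1 - z)^(-lam)) (y:ℂ) := by
      apply AnalyticAt.cpow (analyticAt_const.sub (analyticAt_id)) analyticAt_const
      show ((1:ℂ) - (y:ℂ)) ∈ Complex.slitPlane
      rw [show ((1:ℂ) - (y:ℂ)) = ((1-y : ℝ) : ℂ) by push_cast; ring]
      exact Complex.ofReal_mem_slitPlane.2 (by linarith [hy.2])
    have hC : ContDiffAt ℂ (⊤:ℕ∞) (fun z : ℂ => (1 + z)^(-lam) - (1 - z)^(-lam)) (y:ℂ) :=
      (A1.sub A2).contDiffAt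
    have hR : ContDiffAt ℝ (⊤:ℕ∞) (fun z : ℂ => (1 + z)^(-lam) - (1 - z)^(-lam)) (y:ℂ) :=
      hC.restrict_scalars ℝ
    have hcomp := hR.comp y (Complex.ofRealCLM.contDiff.contDiffAt (x := y))
    exact hcomp
  refine ⟨hsmooth, fun y hy => ⟨rfl, ?_⟩, fun hre => ⟨?_, ?_⟩⟩
  · -- the ODE
    have ha : ((1:ℂ) + (y:ℂ)) ≠ 0 := by
      rw [show ((1:ℂ) + (y:ℂ)) = ((1+y : ℝ) : ℂ) by push_cast; ring]
      exact_mod_cast ne_of_gt (by linarith [hy.1] : (0:ℝ) < 1+y)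
    have hb : ((1:ℂ) - (y:ℂ)) ≠ 0 := by
      rw [show ((1:ℂ) - (y:ℂ)) = ((1-y : ℝ) : ℂ) by push_cast; ring]
      exact_mod_cast ne_of_gt (by linarith [hy.2] : (0:ℝ) < 1-y)
    have E : ∀ a : ℂ, a ≠ 0 →
        a^(-lam) = a^(-lam-1-1)*a*a ∧ a^(-lam-1) = a^(-lam-1-1)*a := by
      intro a hA
      have k1 : a^(-lam-1) = a^(-lam-1-1) * a := by
        conv_lhs => rw [show -lam-1 = (-lam-1-1)+1 by ring]
        rw [Complex.cpow_add _ _ hA, Complex.cpow_one]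
      have k0 : a^(-lam) = a^(-lam-1) * a := by
        conv_lhs => rw [show -lam = (-lam-1)+1 by ring]
        rw [Complex.cpow_add _ _ hA, Complex.cpow_one]
      exact ⟨by rw [k0, k1], k1⟩
    have d1 := (hd1 y hy).deriv
    have d2 : deriv (deriv (eigf lam)) y
        = lam*(lam+1)*(1+(y:ℂ))^(-lam-1-1) - lam*(lam+1)*(1-(y:ℂ))^(-lam-1-1) := by
      have heq : deriv (eigf lam) =ᶠ[nhds y]
          (fun t : ℝ => -lam * (1+(t:ℂ))^(-lam-1) - lam * (1-(t:ℂ))^(-lam-1)) :=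
        Filter.eventuallyEq_of_mem (isOpen_Ioo.mem_nhds hy) (fun t ht => (hd1 t ht).deriv)
      rw [heq.deriv_eq, (hd2 y hy).deriv]
    have d3 : deriv (fun y' => lam * eigf lam y') y
        = lam * (-lam * (1+(y:ℂ))^(-lam-1) - lam * (1-(y:ℂ))^(-lam-1)) :=
      ((hd1 y hy).const_mul lam).deriv
    rw [d1, d2, d3]
    simp only [eigf]
    rw [(E _ ha).1, (E _ ha).2, (E _ hb).1, (E _ hb).2]
    ring
  · -- nontriviality
    refine ⟨1/2, by norm_num, ?_⟩
    intro h
    rw [eigf, sub_eq_zero] at h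
    rw [show ((1:ℂ) + (((1:ℝ)/2 : ℝ):ℂ)) = (((3/2:ℝ)):ℂ) by push_cast; ring,
        show ((1:ℂ) - (((1:ℝ)/2 : ℝ):ℂ)) = (((1/2:ℝ)):ℂ) by push_cast; ring] at h
    have habs := congrArg norm h
    rw [Complex.norm_cpow_eq_rpow_re_of_pos (by norm_num),
        Complex.norm_cpow_eq_rpow_re_of_pos (by norm_num)] at habs
    have hlt : ((1/2:ℝ)) ^ (-lam).re < ((3/2:ℝ)) ^ (-lam).re :=
      Real.rpow_lt_rpow (by norm_num) (by norm_num) (by simpa using neg_pos.2 hre)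
    rw [habs] at hlt
    exact lt_irrefl _ hlt
  · -- finite energy
    have hnre : (-lam).re = -lam.re := by simp
    have hmre : (-lam-1).re = -lam.re - 1 := by simp
    -- second piece: bounded by a constant
    have fin2 : (∫⁻ y in Ioo (-1:ℝ) 1, ENNReal.ofReal (‖lam * eigf lam y‖^2)) < ⊤ := by
      have hbound2 : ∀ y ∈ Ioo (-1:ℝ) 1,
          ‖lam * eigf lam y‖^2 ≤ (‖lam‖ * ((2:ℝ)^(-lam.re) + (2:ℝ)^(-lam.re)))^2 := by
        intro y hy
        have h1 : (0:ℝ) < 1 + y := by linarith [hy.1]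
        have h2 : (0:ℝ) < 1 - y := by linarith [hy.2]
        have n1 : ‖(1 + (y:ℂ))^(-lam)‖ = (1+y)^(-lam.re) := by
          rw [show ((1:ℂ) + (y:ℂ)) = ((1+y : ℝ) : ℂ) by push_cast; ring,
            Complex.norm_cpow_eq_rpow_re_of_pos h1, hnre]
        have n2 : ‖(1 - (y:ℂ))^(-lam)‖ = (1-y)^(-lam.re) := by
          rw [show ((1:ℂ) - (y:ℂ)) = ((1-y : ℝ) : ℂ) by push_cast; ring,
            Complex.norm_cpow_eq_rpow_re_of_pos h2, hnre]
        have hb1 : (1+y)^(-lam.re) ≤ (2:ℝ)^(-lam.re) :=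
          Real.rpow_le_rpow h1.le (by linarith [hy.2]) (by linarith)
        have hb2 : (1-y)^(-lam.re) ≤ (2:ℝ)^(-lam.re) :=
          Real.rpow_le_rpow h2.le (by linarith [hy.1]) (by linarith)
        have hnorm : ‖lam * eigf lam y‖ ≤ ‖lam‖ * ((2:ℝ)^(-lam.re) + (2:ℝ)^(-lam.re)) := by
          rw [norm_mul]
          apply mul_le_mul_of_nonneg_left _ (norm_nonneg lam)
          calc ‖eigf lam y‖ ≤ ‖(1 + (y:ℂ))^(-lam)‖ + ‖(1 - (y:ℂ))^(-lam)‖ := norm_sub_le _ _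
            _ ≤ (2:ℝ)^(-lam.re) + (2:ℝ)^(-lam.re) := by rw [n1, n2]; exact add_le_add hb1 hb2
        exact pow_le_pow_left₀ (norm_nonneg _) hnorm 2
      calc (∫⁻ y in Ioo (-1:ℝ) 1, ENNReal.ofReal (‖lam * eigf lam y‖^2))
          ≤ ∫⁻ _ in Ioo (-1:ℝ) 1,
              ENNReal.ofReal ((‖lam‖ * ((2:ℝ)^(-lam.re) + (2:ℝ)^(-lam.re)))^2) :=
            setLIntegral_mono' measurableSet_Ioo
              (fun y hy => ENNReal.ofReal_le_ofReal (hbound2 y hy))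
        _ = ENNReal.ofReal ((‖lam‖ * ((2:ℝ)^(-lam.re) + (2:ℝ)^(-lam.re)))^2)
              * volume (Ioo (-1:ℝ) 1) := setLIntegral_const _ _
        _ < ⊤ := by
            rw [Real.volume_Ioo]
            exact ENNReal.mul_lt_top ofReal_lt_top ofReal_lt_top
    -- first piece
    have hs : (-1:ℝ) < -2*lam.re - 1 := by linarith
    have fin1 : (∫⁻ y in Ioo (-1:ℝ) 1,
        ENNReal.ofReal ((1 - y^2) * ‖deriv (eigf lam) y‖^2)) < ⊤ := by
      have I0 : IntervalIntegrable (fun x : ℝ => x ^ (-2*lam.re-1)) volume 0 2 :=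
        intervalIntegral.intervalIntegrable_rpow' hs
      have I1 : IntervalIntegrable (fun y : ℝ => (1+y) ^ (-2*lam.re-1)) volume (-1) 1 := by
        have := I0.comp_add_right 1
        norm_num at this
        simpa [add_comm] using this
      have I2 : IntervalIntegrable (fun y : ℝ => (1-y) ^ (-2*lam.re-1)) volume (-1) 1 := by
        have := (I0.comp_sub_left 1).symm
        norm_num at this
        rw [show (-(2*lam.re)-1 : ℝ) = -2*lam.re-1 by ring] at this
        exact this
      have hig : IntegrableOn
          (fun y : ℝ => 4*‖lam‖^2 * ((1+y)^(-2*lam.re-1) + (1-y)^(-2*lam.re-1)))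
          (Ioo (-1:ℝ) 1) := by
        have h3 := ((I1.add I2).const_mul (4*‖lam‖^2))
        rw [intervalIntegrable_iff_integrableOn_Ioo_of_le (by norm_num)] at h3
        exact h3
      have hbound1 : ∀ y ∈ Ioo (-1:ℝ) 1, (1 - y^2) * ‖deriv (eigf lam) y‖^2
          ≤ 4*‖lam‖^2 * ((1+y)^(-2*lam.re-1) + (1-y)^(-2*lam.re-1)) := by
        intro y hy
        have h1 : (0:ℝ) < 1 + y := by linarith [hy.1]
        have h2 : (0:ℝ) < 1 - y := by linarith [hy.2]
        set u : ℝ := (1+y)^(-lam.re-1) with hu_def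
        set v : ℝ := (1-y)^(-lam.re-1) with hv_def
        have nu : ‖(1+(y:ℂ))^(-lam-1)‖ = u := by
          rw [show ((1:ℂ) + (y:ℂ)) = ((1+y : ℝ) : ℂ) by push_cast; ring,
            Complex.norm_cpow_eq_rpow_re_of_pos h1, hmre, hu_def]
        have nv : ‖(1-(y:ℂ))^(-lam-1)‖ = v := by
          rw [show ((1:ℂ) - (y:ℂ)) = ((1-y : ℝ) : ℂ) by push_cast; ring,
            Complex.norm_cpow_eq_rpow_re_of_pos h2, hmre, hv_def]
        have hD : ‖deriv (eigf lam) y‖ ≤ ‖lam‖ * (u + v) := by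
          rw [(hd1 y hy).deriv]
          calc ‖-lam * (1+(y:ℂ))^(-lam-1) - lam * (1-(y:ℂ))^(-lam-1)‖
              ≤ ‖-lam * (1+(y:ℂ))^(-lam-1)‖ + ‖lam * (1-(y:ℂ))^(-lam-1)‖ := norm_sub_le _ _
            _ = ‖lam‖*u + ‖lam‖*v := by rw [norm_mul, norm_mul, norm_neg, nu, nv]
            _ = ‖lam‖ * (u + v) := by ring
        have eu : (1+y) * u^2 = (1+y)^(-2*lam.re-1) := by
          have hu2 : u^2 = (1+y)^((-lam.re-1)*2) := by
            rw [hu_def, ← Real.rpow_natCast ((1+y)^(-lam.re-1)) 2, ← Real.rpow_mul h1.le]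
            norm_num
          rw [hu2, show (-2*lam.re-1 : ℝ) = 1 + (-lam.re-1)*2 by ring,
            Real.rpow_add h1, Real.rpow_one]
        have ev : (1-y) * v^2 = (1-y)^(-2*lam.re-1) := by
          have hv2 : v^2 = (1-y)^((-lam.re-1)*2) := by
            rw [hv_def, ← Real.rpow_natCast ((1-y)^(-lam.re-1)) 2, ← Real.rpow_mul h2.le]
            norm_num
          rw [hv2, show (-2*lam.re-1 : ℝ) = 1 + (-lam.re-1)*2 by ring,
            Real.rpow_add h2, Real.rpow_one]
        have hu : 0 ≤ u := Real.rpow_nonneg h1.le _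
        have hv : 0 ≤ v := Real.rpow_nonneg h2.le _
        have key : (1-y^2) * (u+v)^2
            ≤ 4*((1+y)^(-2*lam.re-1) + (1-y)^(-2*lam.re-1)) := by
          nlinarith [mul_nonneg (mul_nonneg h1.le h2.le) (sq_nonneg (u-v)),
            mul_nonneg (sq_nonneg (1+y)) (sq_nonneg u),
            mul_nonneg (sq_nonneg (1-y)) (sq_nonneg v), eu, ev]
        calc (1 - y^2) * ‖deriv (eigf lam) y‖^2
            ≤ (1 - y^2) * (‖lam‖*(u+v))^2 := by
              apply mul_le_mul_of_nonneg_left _ (by nlinarith : (0:ℝ) ≤ 1 - y^2)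
              exact pow_le_pow_left₀ (norm_nonneg _) hD 2
          _ = ‖lam‖^2 * ((1-y^2)*(u+v)^2) := by ring
          _ ≤ ‖lam‖^2 * (4*((1+y)^(-2*lam.re-1) + (1-y)^(-2*lam.re-1))) :=
              mul_le_mul_of_nonneg_left key (sq_nonneg _)
          _ = 4*‖lam‖^2 * ((1+y)^(-2*lam.re-1) + (1-y)^(-2*lam.re-1)) := by ring
      calc (∫⁻ y in Ioo (-1:ℝ) 1, ENNReal.ofReal ((1 - y^2) * ‖deriv (eigf lam) y‖^2))
          ≤ ∫⁻ y in Ioo (-1:ℝ) 1, ENNReal.ofReal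
              (4*‖lam‖^2 * ((1+y)^(-2*lam.re-1) + (1-y)^(-2*lam.re-1))) :=
            setLIntegral_mono' measurableSet_Ioo
              (fun y hy => ENNReal.ofReal_le_ofReal (hbound1 y hy))
        _ < ⊤ := hig.lintegral_lt_top
    exact ENNReal.add_lt_top.2 ⟨fin1, fin2⟩
end

section
/- Let λ ∈ ℂ with Re λ ≥ 0 and let f ∈ C^∞([−1,1]) be odd and satisfy −(1−y²)f''(y) + 2(λ+1)y f'(y) + λ(λ+1) f(y) − f(y) = 0 for all y ∈ (−1,1). Then f = 0. (In the notation of the paper: Σ_V = ∅ for the constant potential V(y) = −1.) -/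
open MeasureTheory Set ENNReal

private lemma stmt14_alg_end (m A : ℂ) :
    (star m * (m * (A * star A))).re = Complex.normSq m * Complex.normSq A := by
  simp [Complex.star_def, Complex.normSq_apply, Complex.mul_re, Complex.mul_im]
  ring

private lemma stmt14_alg_aux (m A B : ℂ) (s : ℝ) :
    (star m * ((1 - m ^ 2) * (A * star A)) - star m * ((1 : ℂ) - (s : ℂ) ^ 2) * (B * star B)
        + star m * m * (s : ℂ) * (A * star B - B * star A)).re
      = m.re * ((1 - Complex.normSq m) * Complex.normSq A)
        - m.re * ((1 - s ^ 2) * Complex.normSq B) := by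
  simp [Complex.star_def, Complex.normSq_apply, Complex.mul_re, Complex.mul_im, pow_two]
  ring

set_option maxHeartbeats 1600000 in
/-- Triviality of the spectral set for the Yang–Mills potential `V ≡ −1`
(Lemma `lem:specYM`): if `Re λ ≥ 0` and `f ∈ C^∞([-1,1])` is odd and satisfies
`−(1−y²)f'' + 2(λ+1)y f' + λ(λ+1)f − f = 0` on `(-1,1)`, then `f = 0`. -/
theorem stmt14 (lam : ℂ) (hlam : 0 ≤ lam.re) (f : ℝ → ℂ)
    (hf : ContDiffOn ℝ (⊤:ℕ∞) f (Icc (-1:ℝ) 1))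
    (hodd : ∀ y ∈ Icc (-1:ℝ) 1, f (-y) = - f y)
    (hODE : ∀ y ∈ Ioo (-1:ℝ) 1,
      -(1 - (y:ℂ)^2) * deriv (deriv f) y + 2 * (lam + 1) * (y:ℂ) * deriv f y
        + lam * (lam + 1) * f y - f y = 0) :
    ∀ y ∈ Icc (-1:ℝ) 1, f y = 0 := by
  have hIdiff : UniqueDiffOn ℝ (Icc (-1:ℝ) 1) := uniqueDiffOn_Icc (by norm_num)
  set μ : ℂ := lam + 1 with hμdef
  have hp1 : 1 ≤ μ.re := by simp only [hμdef, Complex.add_re, Complex.one_re]; linarith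
  have hnsqμ : 1 ≤ Complex.normSq μ := by
    rw [Complex.normSq_apply]; nlinarith
  set d1 : ℝ → ℂ := derivWithin f (Icc (-1:ℝ) 1) with hd1def
  set d2 : ℝ → ℂ := derivWithin d1 (Icc (-1:ℝ) 1) with hd2def
  set d3 : ℝ → ℂ := derivWithin d2 (Icc (-1:ℝ) 1) with hd3def
  have hC1 : ContDiffOn ℝ (⊤:ℕ∞) d1 (Icc (-1:ℝ) 1) := hf.derivWithin hIdiff (by exact_mod_cast le_top)
  have hC2 : ContDiffOn ℝ (⊤:ℕ∞) d2 (Icc (-1:ℝ) 1) := hC1.derivWithin hIdiff (by exact_mod_cast le_top)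
  have hmem : ∀ y ∈ Ioo (-1:ℝ) 1, Icc (-1:ℝ) 1 ∈ nhds y := fun y hy => Icc_mem_nhds hy.1 hy.2
  have hD1 : ∀ y ∈ Ioo (-1:ℝ) 1, HasDerivAt f (d1 y) y := by
    intro y hy
    have h := ((hf.contDiffAt (hmem y hy)).differentiableAt (by simp)).hasDerivAt
    have e : d1 y = deriv f y := derivWithin_of_mem_nhds (hmem y hy)
    rw [e]; exact h
  have hD2 : ∀ y ∈ Ioo (-1:ℝ) 1, HasDerivAt d1 (d2 y) y := by
    intro y hy
    have h := ((hC1.contDiffAt (hmem y hy)).differentiableAt (by simp)).hasDerivAt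
    have e : d2 y = deriv d1 y := derivWithin_of_mem_nhds (hmem y hy)
    rw [e]; exact h
  have hD3 : ∀ y ∈ Ioo (-1:ℝ) 1, HasDerivAt d2 (d3 y) y := by
    intro y hy
    have h := ((hC2.contDiffAt (hmem y hy)).differentiableAt (by simp)).hasDerivAt
    have e : d3 y = deriv d2 y := derivWithin_of_mem_nhds (hmem y hy)
    rw [e]; exact h
  -- the ODE in terms of d1, d2
  have hODE1 : ∀ y ∈ Ioo (-1:ℝ) 1,
      -(1 - (y:ℂ)^2) * d2 y + 2 * (lam + 1) * (y:ℂ) * d1 y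
        + lam * (lam + 1) * f y - f y = 0 := by
    intro y hy
    have e1 : deriv f y = d1 y := (derivWithin_of_mem_nhds (hmem y hy)).symm
    have heq : deriv f =ᶠ[nhds y] d1 := by
      filter_upwards [isOpen_Ioo.mem_nhds hy] with z hz
      exact (derivWithin_of_mem_nhds (hmem z hz)).symm
    have e2 : deriv (deriv f) y = d2 y := by
      rw [heq.deriv_eq]; exact (derivWithin_of_mem_nhds (hmem y hy)).symm
    have h := hODE y hy
    rw [e2, e1] at h
    exact h
  -- differentiated ODE
  have hODE2 : ∀ y ∈ Ioo (-1:ℝ) 1,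
      (1 - (y:ℂ)^2) * d3 y
        = 2 * (y:ℂ) * d2 y + 2 * (lam + 1) * (d1 y + (y:ℂ) * d2 y)
          + (lam * (lam + 1) - 1) * d1 y := by
    intro y hy
    have hform : HasDerivAt (fun x : ℝ => (x:ℂ)) 1 y := by
      exact Complex.ofRealCLM.hasDerivAt (x := y)
    have hA : HasDerivAt (fun x : ℝ => -(1 - (x:ℂ)^2)) (2*(y:ℂ)) y := by
      have h0 : HasDerivAt (fun x : ℝ => (x:ℂ)^2) (2*(y:ℂ)) y := by
        have hm := hform.mul hform
        simp only [mul_one, one_mul] at hm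
        simp only [pow_two]
        convert hm using 1
        exacts [rfl, rfl, by ring]
      have h1 := (h0.const_sub 1).neg
      rw [neg_neg] at h1
      exact h1
    have hEd : HasDerivAt
        (fun x : ℝ => -(1 - (x:ℂ)^2) * d2 x + 2*(lam+1) * ((x:ℂ) * d1 x)
          + (lam*(lam+1) - 1) * f x)
        ((2*(y:ℂ)) * d2 y + -(1 - (y:ℂ)^2) * d3 y
          + (2*(lam+1)) * (1 * d1 y + (y:ℂ) * d2 y)
          + (lam*(lam+1) - 1) * d1 y) y := by
      exact ((hA.mul (hD3 y hy)).add
        ((hform.mul (hD2 y hy)).const_mul (2*(lam+1)))).add ((hD1 y hy).const_mul _)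
    have hE0 : deriv (fun x : ℝ => -(1 - (x:ℂ)^2) * d2 x + 2*(lam+1) * ((x:ℂ) * d1 x)
          + (lam*(lam+1) - 1) * f x) y = 0 := by
      have heq : (fun x : ℝ => -(1 - (x:ℂ)^2) * d2 x + 2*(lam+1) * ((x:ℂ) * d1 x)
          + (lam*(lam+1) - 1) * f x) =ᶠ[nhds y] (fun _ => (0:ℂ)) := by
        filter_upwards [isOpen_Ioo.mem_nhds hy] with z hz
        have := hODE1 z hz
        linear_combination this
      rw [heq.deriv_eq]; simp
    have hzero : (2*(y:ℂ)) * d2 y + -(1 - (y:ℂ)^2) * d3 y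
          + (2*(lam+1)) * (1 * d1 y + (y:ℂ) * d2 y)
          + (lam*(lam+1) - 1) * d1 y = 0 := by
      rw [← hEd.deriv]; exact hE0
    linear_combination -hzero
  -- the monotone quantity
  set ψ : ℝ → ℝ := fun x =>
    (star μ * (-(1 - (x:ℂ)^2) * d2 x * star (d1 x)
      + μ * ((x:ℂ) * (d1 x * star (d1 x))))).re with hψdef
  have hψd : ∀ y ∈ Ioo (-1:ℝ) 1, HasDerivAt ψ
      (μ.re * ((1 - Complex.normSq μ) * Complex.normSq (d1 y))
        - μ.re * ((1 - y ^ 2) * Complex.normSq (d2 y))) y := by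
    intro y hy
    have hform : HasDerivAt (fun x : ℝ => (x:ℂ)) 1 y := by
      exact Complex.ofRealCLM.hasDerivAt (x := y)
    have hA : HasDerivAt (fun x : ℝ => -(1 - (x:ℂ)^2)) (2*(y:ℂ)) y := by
      have h0 : HasDerivAt (fun x : ℝ => (x:ℂ)^2) (2*(y:ℂ)) y := by
        have hm := hform.mul hform
        simp only [mul_one, one_mul] at hm
        simp only [pow_two]
        convert hm using 1
        exacts [rfl, rfl, by ring]
      have h1 := (h0.const_sub 1).neg
      rw [neg_neg] at h1
      exact h1
    have hstar : HasDerivAt (fun x => star (d1 x)) (star (d2 y)) y := (hD2 y hy).star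
    have hstar2 : HasDerivAt (fun x => star (d2 x)) (star (d3 y)) y := (hD3 y hy).star
    have hP1 : HasDerivAt (fun x : ℝ => -(1 - (x:ℂ)^2) * d2 x * star (d1 x))
        (((2*(y:ℂ)) * d2 y + -(1 - (y:ℂ)^2) * d3 y) * star (d1 y)
          + -(1 - (y:ℂ)^2) * d2 y * star (d2 y)) y :=
      (hA.mul (hD3 y hy)).mul hstar
    have hP2 : HasDerivAt (fun x : ℝ => μ * ((x:ℂ) * (d1 x * star (d1 x))))
        (μ * (1 * (d1 y * star (d1 y))
          + (y:ℂ) * (d2 y * star (d1 y) + d1 y * star (d2 y)))) y :=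
      (hform.mul ((hD2 y hy).mul hstar)).const_mul μ
    have hΨ : HasDerivAt (fun x : ℝ =>
        star μ * (-(1 - (x:ℂ)^2) * d2 x * star (d1 x)
          + μ * ((x:ℂ) * (d1 x * star (d1 x)))))
        (star μ * ((((2*(y:ℂ)) * d2 y + -(1 - (y:ℂ)^2) * d3 y) * star (d1 y)
          + -(1 - (y:ℂ)^2) * d2 y * star (d2 y))
          + (μ * (1 * (d1 y * star (d1 y))
            + (y:ℂ) * (d2 y * star (d1 y) + d1 y * star (d2 y)))))) y :=
      (hP1.add hP2).const_mul (star μ)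
    have htidy : star μ * ((((2*(y:ℂ)) * d2 y + -(1 - (y:ℂ)^2) * d3 y) * star (d1 y)
          + -(1 - (y:ℂ)^2) * d2 y * star (d2 y))
          + (μ * (1 * (d1 y * star (d1 y))
            + (y:ℂ) * (d2 y * star (d1 y) + d1 y * star (d2 y)))))
        = star μ * ((1 - μ ^ 2) * (d1 y * star (d1 y)))
          - star μ * ((1 : ℂ) - (y : ℂ) ^ 2) * (d2 y * star (d2 y))
          + star μ * μ * (y : ℂ) * (d1 y * star (d2 y) - d2 y * star (d1 y)) := by
      have h := hODE2 y hy
      rw [hμdef]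
      linear_combination (-(star μ) * star (d1 y)) * h
    rw [htidy] at hΨ
    have h2 := Complex.reCLM.hasFDerivAt.comp_hasDerivAt y hΨ
    have h3 := stmt14_alg_aux μ (d1 y) (d2 y) y
    simp only [Function.comp_def, Complex.reCLM_apply] at h2
    rw [h3] at h2
    exact h2
  -- continuity of ψ on the closed interval
  have hc1 : ContinuousOn d1 (Icc (-1:ℝ) 1) := hC1.continuousOn
  have hc2 : ContinuousOn d2 (Icc (-1:ℝ) 1) := hC2.continuousOn
  have hψc : ContinuousOn ψ (Icc (-1:ℝ) 1) := by
    apply Complex.continuous_re.comp_continuousOn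
    apply ContinuousOn.mul continuousOn_const
    apply ContinuousOn.add
    · exact (((Continuous.continuousOn (by continuity)).mul hc2).mul
        (continuous_star.comp_continuousOn hc1))
    · exact continuousOn_const.mul ((Complex.continuous_ofReal.continuousOn).mul
        (hc1.mul (continuous_star.comp_continuousOn hc1)))
  have hm1mem : (-1:ℝ) ∈ Icc (-1:ℝ) 1 := by norm_num
  have h1mem : (1:ℝ) ∈ Icc (-1:ℝ) 1 := by norm_num
  have h0mem : (0:ℝ) ∈ Icc (-1:ℝ) 1 := by norm_num
  -- ψ is antitone
  have hanti : AntitoneOn ψ (Icc (-1:ℝ) 1) := by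
    apply antitoneOn_of_deriv_nonpos (convex_Icc _ _) hψc
    · intro x hx
      rw [interior_Icc] at hx
      exact (hψd x hx).differentiableAt.differentiableWithinAt
    · intro x hx
      rw [interior_Icc] at hx
      rw [(hψd x hx).deriv]
      have hx2 : 0 ≤ 1 - x^2 := by nlinarith [hx.1, hx.2]
      have t1 : μ.re * ((1 - Complex.normSq μ) * Complex.normSq (d1 x)) ≤ 0 :=
        mul_nonpos_of_nonneg_of_nonpos (by linarith)
          (mul_nonpos_of_nonpos_of_nonneg (by linarith) (Complex.normSq_nonneg _))
      have t2 : 0 ≤ μ.re * ((1 - x^2) * Complex.normSq (d2 x)) :=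
        mul_nonneg (by linarith) (mul_nonneg hx2 (Complex.normSq_nonneg _))
      linarith
  -- endpoint values
  have hψ1 : ψ 1 = Complex.normSq μ * Complex.normSq (d1 1) := by
    have h0 : ψ 1 = (star μ * (μ * (d1 1 * star (d1 1)))).re := by
      simp only [hψdef]
      norm_num
    rw [h0, stmt14_alg_end]
  have hψm1 : ψ (-1) = -(Complex.normSq μ * Complex.normSq (d1 (-1))) := by
    have h0 : ψ (-1) = (-(star μ * (μ * (d1 (-1) * star (d1 (-1)))))).re := by
      simp only [hψdef]
      have hc : (star μ * (-(1 - ((-1:ℝ):ℂ)^2) * d2 (-1) * star (d1 (-1))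
          + μ * (((-1:ℝ):ℂ) * (d1 (-1) * star (d1 (-1))))))
          = -(star μ * (μ * (d1 (-1) * star (d1 (-1))))) := by
        push_cast
        ring
      rw [hc]
    rw [h0, Complex.neg_re, stmt14_alg_end]
  have hle : ψ 1 ≤ ψ (-1) := hanti hm1mem h1mem (by norm_num)
  have hz1 : Complex.normSq (d1 1) = 0 := by
    rw [hψ1, hψm1] at hle
    nlinarith [Complex.normSq_nonneg (d1 1), Complex.normSq_nonneg (d1 (-1))]
  have hzm1 : Complex.normSq (d1 (-1)) = 0 := by
    rw [hψ1, hψm1] at hle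
    nlinarith [Complex.normSq_nonneg (d1 1), Complex.normSq_nonneg (d1 (-1))]
  have hψ1z : ψ 1 = 0 := by rw [hψ1, hz1, mul_zero]
  have hψm1z : ψ (-1) = 0 := by rw [hψm1, hzm1, mul_zero, neg_zero]
  have hψ0 : ∀ x ∈ Icc (-1:ℝ) 1, ψ x = 0 := by
    intro x hx
    have hup : ψ x ≤ 0 := by
      have := hanti hm1mem hx hx.1
      linarith [hψm1z]
    have hlow : 0 ≤ ψ x := by
      have := hanti hx h1mem hx.2
      linarith [hψ1z]
    linarith
  -- second derivative vanishes
  have hd2z : ∀ y ∈ Ioo (-1:ℝ) 1, d2 y = 0 := by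
    intro y hy
    have hder : deriv ψ y = 0 := by
      have heq : ψ =ᶠ[nhds y] fun _ => (0:ℝ) := by
        filter_upwards [isOpen_Ioo.mem_nhds hy] with z hz
        exact hψ0 z (Ioo_subset_Icc_self hz)
      rw [heq.deriv_eq]; simp
    have h := (hψd y hy).deriv
    rw [hder] at h
    have hx2 : 0 < 1 - y^2 := by nlinarith [hy.1, hy.2]
    have hB : Complex.normSq (d2 y) = 0 := by
      by_contra hne
      have hpos : 0 < Complex.normSq (d2 y) :=
        lt_of_le_of_ne (Complex.normSq_nonneg _) (Ne.symm hne)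
      have hA := Complex.normSq_nonneg (d1 y)
      have t2 : 0 < μ.re * ((1 - y^2) * Complex.normSq (d2 y)) :=
        mul_pos (by linarith) (mul_pos hx2 hpos)
      have t1 : μ.re * ((1 - Complex.normSq μ) * Complex.normSq (d1 y)) ≤ 0 :=
        mul_nonpos_of_nonneg_of_nonpos (by linarith)
          (mul_nonpos_of_nonpos_of_nonneg (by linarith) hA)
      linarith
    exact Complex.normSq_eq_zero.mp hB
  -- functions with vanishing derivative on the open interval are constant on Icc
  have hconst : ∀ u : ℝ → ℂ, ContinuousOn u (Icc (-1:ℝ) 1) →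
      (∀ y ∈ Ioo (-1:ℝ) 1, HasDerivAt u 0 y) →
      ∀ x ∈ Icc (-1:ℝ) 1, u x = u 1 := by
    intro u hc hd x hx
    have key : ∀ v : ℝ → ℝ, ContinuousOn v (Icc (-1:ℝ) 1) →
        (∀ y ∈ Ioo (-1:ℝ) 1, HasDerivAt v 0 y) → v x = v 1 := by
      intro v hvc hvd
      have hdiff : DifferentiableOn ℝ v (interior (Icc (-1:ℝ) 1)) := by
        intro z hz
        rw [interior_Icc] at hz
        exact (hvd z hz).differentiableAt.differentiableWithinAt
      have hmono : MonotoneOn v (Icc (-1:ℝ) 1) := by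
        apply monotoneOn_of_deriv_nonneg (convex_Icc _ _) hvc hdiff
        intro z hz
        rw [interior_Icc] at hz
        rw [(hvd z hz).deriv]
      have hant : AntitoneOn v (Icc (-1:ℝ) 1) := by
        apply antitoneOn_of_deriv_nonpos (convex_Icc _ _) hvc hdiff
        intro z hz
        rw [interior_Icc] at hz
        rw [(hvd z hz).deriv]
      exact le_antisymm (hmono hx h1mem hx.2) (hant hx h1mem hx.2)
    have hre := key (fun t => (u t).re) (Complex.continuous_re.comp_continuousOn hc)
      (fun y hy => by
        have h2 := Complex.reCLM.hasFDerivAt.comp_hasDerivAt y (hd y hy)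
        simp only [Function.comp_def, Complex.reCLM_apply, map_zero] at h2
        exact h2)
    have him := key (fun t => (u t).im) (Complex.continuous_im.comp_continuousOn hc)
      (fun y hy => by
        have h2 := Complex.imCLM.hasFDerivAt.comp_hasDerivAt y (hd y hy)
        simp only [Function.comp_def, Complex.imCLM_apply, map_zero] at h2
        exact h2)
    exact Complex.ext hre him
  -- d1 vanishes everywhere
  have hd11 : d1 1 = 0 := Complex.normSq_eq_zero.mp hz1
  have hd1all : ∀ x ∈ Icc (-1:ℝ) 1, d1 x = 0 := by
    intro x hx
    have := hconst d1 hc1 (fun y hy => by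
      have h := hD2 y hy
      rw [hd2z y hy] at h
      exact h) x hx
    rw [this, hd11]
  -- f is constant
  have hfall : ∀ x ∈ Icc (-1:ℝ) 1, f x = f 1 :=
    hconst f hf.continuousOn (fun y hy => by
      have h := hD1 y hy
      rw [hd1all y (Ioo_subset_Icc_self hy)] at h
      exact h)
  have hf0 : f 0 = 0 := by
    have h := hodd 0 h0mem
    rw [neg_zero] at h
    have h2 : (2:ℂ) * f 0 = 0 := by linear_combination h
    simpa using h2
  have hf1 : f 1 = 0 := by
    have := hfall 0 h0mem
    rw [hf0] at this
    exact this.symm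
  intro y hy
  rw [hfall y hy, hf1]
end

section
/- Let V ∈ C([−1,1]) be complex-valued. Then there exists a constant C > 0 (depending only on sup_{x∈[−1,1]}|V(x)|) such that for all λ ∈ ℂ∖{0} with Re λ ≥ −1/4 and all 0 ≤ y ≤ x < 1 one has |K(y,x,λ)| ≤ C (1−x)^{−1/4} |λ|^{−1}. -/
open MeasureTheory Set ENNReal

/-- The Volterra kernel
`K(y,x,λ) = (2λ)⁻¹ [1 − ((1−y)/(1+y))^{−λ} ((1−x)/(1+x))^{λ}] V(x)`. -/
noncomputable def Kker (V : ℝ → ℂ) (lam : ℂ) (y x : ℝ) : ℂ :=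
  (2 * lam)⁻¹ * (1 - (((1 - y)/(1 + y) : ℝ) : ℂ) ^ (-lam) *
    (((1 - x)/(1 + x) : ℝ) : ℂ) ^ lam) * V x

/-- Kernel bound for large `λ` (from the proof of Proposition `prop:v1`): there is a
constant `C > 0`, depending only on `sup |V|`, such that
`|K(y,x,λ)| ≤ C (1−x)^{−1/4} |λ|⁻¹` for all `λ ≠ 0` with `Re λ ≥ −1/4` and
`0 ≤ y ≤ x < 1`. -/
theorem stmt16 (V : ℝ → ℂ) (hV : ContinuousOn V (Icc (-1:ℝ) 1)) :
    ∃ C : ℝ, 0 < C ∧ ∀ lam : ℂ, lam ≠ 0 → -(1/4) ≤ lam.re →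
      ∀ y x : ℝ, 0 ≤ y → y ≤ x → x < 1 →
        ‖Kker V lam y x‖ ≤ C * (1 - x) ^ (-(1/4) : ℝ) * ‖lam‖⁻¹ := by
  obtain ⟨M, hM⟩ := isCompact_Icc.exists_bound_of_continuousOn hV
  set M' : ℝ := max M 1 with hM'def
  have hM'pos : (0:ℝ) < M' := lt_of_lt_of_le one_pos (le_max_right _ _)
  have hc : (0:ℝ) < 2 ^ ((1:ℝ)/4) := Real.rpow_pos_of_pos two_pos _
  refine ⟨(1 + 2 ^ ((1:ℝ)/4)) * M' / 2, by positivity, ?_⟩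
  intro lam hlam hre y x hy hyx hx
  have hx1 : (0:ℝ) < 1 - x := by linarith
  have hx2 : (0:ℝ) < 1 + x := by linarith
  have hy1 : (0:ℝ) < 1 - y := by linarith
  have hy2 : (0:ℝ) < 1 + y := by linarith
  set t : ℝ := (1 - x)/(1 + x) with htdef
  set s : ℝ := (1 - y)/(1 + y) with hsdef
  have ht : 0 < t := div_pos hx1 hx2
  have hs : 0 < s := div_pos hy1 hy2
  have hs1 : s ≤ 1 := by rw [hsdef, div_le_one hy2]; linarith
  have hts : t ≤ s := by
    rw [htdef, hsdef, div_le_div_iff₀ hx2 hy2]; nlinarith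
  set e : ℝ := -(1/4)
  have hee : e ≤ 0 := by norm_num [e]
  have hpow1 : (1:ℝ) ≤ (1 - x) ^ e := by
    have h1 : (1 - x) ^ e ≥ (1:ℝ) ^ e :=
      Real.rpow_le_rpow_of_nonpos hx1 (by linarith) hee
    simpa using h1
  -- bound on the cpow product
  have hP : ‖((s:ℂ)) ^ (-lam) * ((t:ℂ)) ^ lam‖ ≤ 2 ^ ((1:ℝ)/4) * (1 - x) ^ e := by
    have h1 : ‖((s:ℂ)) ^ (-lam) * ((t:ℂ)) ^ lam‖ = s ^ (-lam.re) * t ^ lam.re := by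
      rw [norm_mul,
        Complex.norm_cpow_eq_rpow_re_of_pos hs, Complex.norm_cpow_eq_rpow_re_of_pos ht]
      simp
    rw [h1]
    set r : ℝ := t / s with hrdef
    have hr : 0 < r := div_pos ht hs
    have hr1 : r ≤ 1 := by rw [hrdef, div_le_one hs]; exact hts
    have h2 : s ^ (-lam.re) * t ^ lam.re = r ^ lam.re := by
      rw [hrdef, Real.div_rpow ht.le hs.le, Real.rpow_neg hs.le]
      ring
    rw [h2]
    have h3 : r ^ lam.re ≤ r ^ e :=
      Real.rpow_le_rpow_of_exponent_ge hr hr1 hre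
    have htr : t ≤ r := by
      rw [hrdef, le_div_iff₀ hs]
      nlinarith
    have h4 : r ^ e ≤ t ^ e := Real.rpow_le_rpow_of_nonpos ht htr hee
    have ht2 : (1 - x) / 2 ≤ t := by
      rw [htdef, div_le_div_iff₀ two_pos hx2]; nlinarith
    have h5 : t ^ e ≤ ((1 - x)/2) ^ e :=
      Real.rpow_le_rpow_of_nonpos (by linarith) ht2 hee
    have h6 : ((1 - x)/2) ^ e = 2 ^ ((1:ℝ)/4) * (1 - x) ^ e := by
      rw [Real.div_rpow hx1.le (by norm_num : (0:ℝ) ≤ 2)]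
      rw [show e = -(1/4) from rfl, Real.rpow_neg (by norm_num : (0:ℝ) ≤ 2)]
      field_simp
    linarith
  have hVx : ‖V x‖ ≤ M' := by
    refine le_trans (hM x ⟨by linarith, hx.le⟩) (le_max_left _ _)
  have hA : ‖1 - ((s:ℂ)) ^ (-lam) * ((t:ℂ)) ^ lam‖ ≤ (1 + 2 ^ ((1:ℝ)/4)) * (1 - x) ^ e := by
    calc ‖1 - ((s:ℂ)) ^ (-lam) * ((t:ℂ)) ^ lam‖
        ≤ ‖(1:ℂ)‖ + ‖((s:ℂ)) ^ (-lam) * ((t:ℂ)) ^ lam‖ := norm_sub_le _ _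
      _ ≤ 1 * ((1 - x) ^ e) + 2 ^ ((1:ℝ)/4) * (1 - x) ^ e := by
          rw [norm_one]
          have := hP
          nlinarith
      _ = (1 + 2 ^ ((1:ℝ)/4)) * (1 - x) ^ e := by ring
  have hnorm : ‖Kker V lam y x‖ =
      (2 * ‖lam‖)⁻¹ * ‖1 - ((s:ℂ)) ^ (-lam) * ((t:ℂ)) ^ lam‖ * ‖V x‖ := by
    have e1 : Kker V lam y x = (2*lam)⁻¹ * (1 - ((s:ℂ)) ^ (-lam) * ((t:ℂ)) ^ lam) * V x := rfl
    rw [e1, norm_mul, norm_mul, norm_inv, norm_mul]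
    norm_num
  rw [hnorm]
  have hlamn : (0:ℝ) < ‖lam‖ := norm_pos_iff.mpr hlam
  have step : (2 * ‖lam‖)⁻¹ * ‖1 - ((s:ℂ)) ^ (-lam) * ((t:ℂ)) ^ lam‖ * ‖V x‖
      ≤ (2 * ‖lam‖)⁻¹ * ((1 + 2 ^ ((1:ℝ)/4)) * (1 - x) ^ e) * M' := by
    gcongr
  refine step.trans (le_of_eq ?_)
  rw [mul_inv]
  ring
end

section
/- Let V ∈ C([−1,1]) be complex-valued. Then there exists a constant C > 0 (depending only on sup_{x∈[−1,1]}|V(x)|) such that for all λ ∈ ℂ∖{0} with |λ| ≤ 1 and Re λ ≥ −1/4, and all 0 ≤ y ≤ x < 1, one has |K(y,x,λ)| ≤ C (1−x)^{−1/2}. -/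
open MeasureTheory Set ENNReal

/-- Kernel bound for small `λ` (from the proof of Proposition `prop:v1`): there is a
constant `C > 0`, depending only on `sup |V|`, such that
`|K(y,x,λ)| ≤ C (1−x)^{−1/2}` for all `λ ≠ 0` with `|λ| ≤ 1`, `Re λ ≥ −1/4`, and
`0 ≤ y ≤ x < 1`. -/
theorem stmt17 (V : ℝ → ℂ) (hV : ContinuousOn V (Icc (-1:ℝ) 1)) :
    ∃ C : ℝ, 0 < C ∧ ∀ lam : ℂ, lam ≠ 0 → ‖lam‖ ≤ 1 → -(1/4) ≤ lam.re →
      ∀ y x : ℝ, 0 ≤ y → y ≤ x → x < 1 →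
        ‖Kker V lam y x‖ ≤ C * (1 - x) ^ (-(1/2) : ℝ) := by
  obtain ⟨M, hM⟩ := isCompact_Icc.exists_bound_of_continuousOn hV
  set M' := max M 0 with hM'
  refine ⟨2 * Real.sqrt 2 * (M' + 1), by positivity, ?_⟩
  intro lam hlam hlam1 hre y x hy hyx hx
  have hy1 : y < 1 := lt_of_le_of_lt hyx hx
  set a : ℝ := (1 - y)/(1 + y) with ha
  set b : ℝ := (1 - x)/(1 + x) with hb
  have hapos : 0 < a := div_pos (by linarith) (by linarith)
  have hbpos : 0 < b := div_pos (by linarith) (by linarith)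
  have hba : b ≤ a := by
    rw [ha, hb, div_le_div_iff₀ (by linarith) (by linarith)]
    nlinarith
  have ha1 : a ≤ 1 := by
    rw [ha, div_le_one (by linarith)]; linarith
  set s : ℝ := Real.log b - Real.log a with hs
  have hs0 : s ≤ 0 := sub_nonpos.2 (Real.log_le_log hbpos hba)
  set t : ℝ := -s with ht
  have htnn : 0 ≤ t := by simp [ht]; linarith
  -- rewrite the power product as an exponential
  have hE : ((a:ℂ)) ^ (-lam) * ((b:ℂ)) ^ lam = Complex.exp (lam * s) := by
    rw [Complex.cpow_def_of_ne_zero (by exact_mod_cast hapos.ne'),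
        Complex.cpow_def_of_ne_zero (by exact_mod_cast hbpos.ne'),
        ← Complex.exp_add, ← Complex.ofReal_log hapos.le,
        ← Complex.ofReal_log hbpos.le]
    congr 1
    push_cast [hs]
    ring
  -- express via integral
  have hint : (1 : ℂ) - Complex.exp (lam * s)
      = lam * ∫ u in s..(0:ℝ), Complex.exp (lam * u) := by
    rw [integral_exp_mul_complex hlam, mul_div_cancel₀ _ hlam]
    simp
  -- bound the integral
  have hIb : ‖∫ u in s..(0:ℝ), Complex.exp (lam * ↑u)‖ ≤ Real.exp (t/4) * t := by
    have h := intervalIntegral.norm_integral_le_of_norm_le_const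
      (C := Real.exp (t/4)) (f := fun u : ℝ => Complex.exp (lam * ↑u)) (a := s) (b := 0) ?_
    · calc ‖∫ u in s..(0:ℝ), Complex.exp (lam * ↑u)‖
          ≤ Real.exp (t/4) * |0 - s| := h
        _ = Real.exp (t/4) * t := by rw [abs_of_nonneg (by linarith)]; ring_nf; rw [ht]; ring
    · intro u hu
      rw [Set.uIoc_of_le hs0] at hu
      have hu0 : u ≤ 0 := hu.2
      have hus : s ≤ u := hu.1.le
      rw [Complex.norm_exp]
      apply Real.exp_le_exp.2
      have hre' : (lam * (u:ℂ)).re = lam.re * u := by simp [Complex.mul_re]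
      rw [hre']
      nlinarith [mul_nonpos_of_nonneg_of_nonpos (by linarith : (0:ℝ) ≤ lam.re + 1/4) hu0]
  -- rewrite the kernel
  have hK : Kker V lam y x = (2:ℂ)⁻¹ * (∫ u in s..(0:ℝ), Complex.exp (lam * ↑u)) * V x := by
    rw [Kker, hE, hint]
    have : (2 * lam)⁻¹ * (lam * ∫ u in s..(0:ℝ), Complex.exp (lam * ↑u))
        = (2:ℂ)⁻¹ * ∫ u in s..(0:ℝ), Complex.exp (lam * ↑u) := by
      field_simp
    rw [this]
  -- bound on V
  have hVx : ‖V x‖ ≤ M' + 1 := by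
    have := hM x ⟨by linarith, hx.le⟩
    have : ‖V x‖ ≤ M' := le_trans this (le_max_left _ _)
    linarith
  -- exponential bounds
  have het : Real.exp t ≤ 2 / (1 - x) := by
    have h1 : Real.exp t = a / b := by
      rw [ht, hs, neg_sub, Real.exp_sub, Real.exp_log hapos, Real.exp_log hbpos]
    rw [h1]
    have hab : a / b ≤ 1 / b := by gcongr
    have h2 : 1 / b = (1 + x) / (1 - x) := by
      rw [hb, one_div, inv_div]
    have h3 : (1 + x) / (1 - x) ≤ 2 / (1 - x) := by gcongr <;> linarith
    calc a / b ≤ 1 / b := hab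
      _ = (1 + x)/(1 - x) := h2
      _ ≤ 2 / (1 - x) := h3
  have hhalf : Real.exp (t/2) ≤ Real.sqrt 2 * (1 - x) ^ (-(1/2) : ℝ) := by
    have h1 : Real.exp (t/2) = (Real.exp t) ^ ((1:ℝ)/2) := by
      rw [← Real.exp_mul]; ring_nf
    rw [h1]
    have h2 : (Real.exp t) ^ ((1:ℝ)/2) ≤ (2 / (1 - x)) ^ ((1:ℝ)/2) :=
      Real.rpow_le_rpow (Real.exp_pos t).le het (by norm_num)
    have h3 : (2 / (1 - x)) ^ ((1:ℝ)/2) = Real.sqrt 2 * (1 - x) ^ (-(1/2) : ℝ) := by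
      rw [Real.div_rpow (by norm_num) (by linarith), Real.sqrt_eq_rpow,
          show (-(1/2) : ℝ) = -(1/2) from rfl, Real.rpow_neg (by linarith : (0:ℝ) ≤ 1 - x)]
      rw [div_eq_mul_inv]
    rw [← h3]; exact h2
  -- t * e^{t/4} ≤ 4 e^{t/2}
  have hte : t * Real.exp (t/4) ≤ 4 * Real.exp (t/2) := by
    have h1 : t ≤ 4 * Real.exp (t/4) := by
      have := Real.add_one_le_exp (t/4)
      nlinarith [Real.exp_pos (t/4)]
    have h2 : Real.exp (t/4) * Real.exp (t/4) = Real.exp (t/2) := by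
      rw [← Real.exp_add]; ring_nf
    nlinarith [Real.exp_pos (t/4)]
  -- put it together
  rw [hK]
  rw [norm_mul, norm_mul]
  have h2inv : ‖(2:ℂ)⁻¹‖ = 1/2 := by norm_num
  rw [h2inv]
  have hIbnn : (0:ℝ) ≤ ‖∫ u in s..(0:ℝ), Complex.exp (lam * ↑u)‖ := norm_nonneg _
  have hfinal : Real.exp (t/4) * t ≤ 4 * Real.sqrt 2 * (1 - x) ^ (-(1/2) : ℝ) := by
    calc Real.exp (t/4) * t = t * Real.exp (t/4) := by ring
      _ ≤ 4 * Real.exp (t/2) := hte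
      _ ≤ 4 * (Real.sqrt 2 * (1 - x) ^ (-(1/2) : ℝ)) := by
          exact mul_le_mul_of_nonneg_left hhalf (by norm_num)
      _ = 4 * Real.sqrt 2 * (1 - x) ^ (-(1/2) : ℝ) := by ring
  have hVnn : (0:ℝ) ≤ ‖V x‖ := norm_nonneg _
  have hrpnn : (0:ℝ) ≤ (1 - x) ^ (-(1/2) : ℝ) := Real.rpow_nonneg (by linarith) _
  calc 1/2 * ‖∫ u in s..(0:ℝ), Complex.exp (lam * ↑u)‖ * ‖V x‖
      ≤ 1/2 * (Real.exp (t/4) * t) * (M' + 1) := by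
        apply mul_le_mul
        · apply mul_le_mul_of_nonneg_left hIb (by norm_num)
        · exact hVx
        · exact hVnn
        · positivity
    _ ≤ 1/2 * (4 * Real.sqrt 2 * (1 - x) ^ (-(1/2) : ℝ)) * (M' + 1) := by
        apply mul_le_mul_of_nonneg_right _ (by positivity)
        apply mul_le_mul_of_nonneg_left hfinal (by norm_num)
    _ = 2 * Real.sqrt 2 * (M' + 1) * (1 - x) ^ (-(1/2) : ℝ) := by ring
end
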